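/- Let t = 2k+1 > 1 be an odd integer and let g(x) = b·x·∏_{j=1}^{k}(x² − j²) for a sufficiently large positive constant b. Then g is an odd polynomial function from ℝ to ℝ, and on each of the intervals determined by consecutive points of {−k, …, −1, 0, 1, …, k}, extended suitably, the equation g(x) = −x has solutions; in fact for every positive integer m the equation g^m(x) = −x has exactly t^m distinct real solutions. -/

import Mathlib

lemma mono15 {y : ℕ → ℝ} {n : ℕ} (h : ∀ i, i < n → y i < y (i+1)) :
    ∀ d i, i + d ≤ n → y i ≤ y (i + d) := by
  intro d
  induction d with
  | zero => intro i _; simp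
  | succ d ih =>
    intro i hi
    calc y i ≤ y (i + d) := ih i (by omega)
    _ ≤ y (i + (d+1)) := by
        rw [show i + (d+1) = (i+d)+1 by omega]
        exact (h (i+d) (by omega)).le

lemma sel15 (f : ℝ → ℝ) (hf : Continuous f) :
    ∀ (n : ℕ) (vals : ℕ → ℝ) (u v : ℝ), u ≤ v →
    (∀ i, i < n → vals i < vals (i+1)) → f u < vals 0 → vals n ≤ f v →
    ∃ y : ℕ → ℝ, (∀ j, j < n → y j < y (j+1)) ∧
      ∀ j ≤ n, u < y j ∧ y j ≤ v ∧ f (y j) = vals j := by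
  intro n
  induction n with
  | zero =>
    intro vals u v huv _ h0 h1
    obtain ⟨x, hx, hfx⟩ := intermediate_value_Icc huv hf.continuousOn ⟨h0.le, h1⟩
    refine ⟨fun _ => x, by omega, fun j hj => ⟨?_, hx.2, ?_⟩⟩
    · rcases eq_or_lt_of_le hx.1 with h | h
      · exact absurd hfx (by rw [← h]; exact ne_of_lt h0)
      · exact h
    · interval_cases j; exact hfx
  | succ n ih =>
    intro vals u v huv hm h0 hn1
    obtain ⟨y, hym, hy⟩ := ih vals u v huv (fun i hi => hm i (by omega)) h0
      (le_of_lt (lt_of_lt_of_le (hm n (by omega)) hn1))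
    obtain ⟨hyu, hyv, hyval⟩ := hy n le_rfl
    have h2 : f (y n) < vals (n+1) := by rw [hyval]; exact hm n (by omega)
    obtain ⟨x, hx, hfx⟩ := intermediate_value_Icc hyv hf.continuousOn ⟨h2.le, hn1⟩
    have hxy : y n < x := by
      rcases eq_or_lt_of_le hx.1 with h | h
      · exact absurd hfx (by rw [← h]; exact ne_of_lt h2)
      · exact h
    refine ⟨fun j => if j ≤ n then y j else x, fun j hj => ?_, fun j hj => ?_⟩
    · by_cases h : j+1 ≤ n
      · simp only [if_pos (by omega : j ≤ n), if_pos h]; exact hym j (by omega)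
      · have hjn : j = n := by omega
        subst hjn
        simp only [if_pos le_rfl, if_neg (by omega : ¬ j+1 ≤ j)]
        exact hxy
    · by_cases h : j ≤ n
      · simp only [if_pos h]
        exact ⟨(hy j h).1, (hy j h).2.1, (hy j h).2.2⟩
      · have hj1 : j = n+1 := by omega
        subst hj1
        simp only [if_neg (by omega : ¬ n+1 ≤ n)]
        exact ⟨lt_trans hyu hxy, hx.2, hfx⟩

lemma step15 (g f : ℝ → ℝ) (hf : Continuous f) (c C : ℝ) (hc : 0 < c) (hcC : c < C)
    (t : ℕ) (ht : t % 2 = 1) (w : ℕ → ℝ)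
    (hwm : ∀ j, j < t → w j < w (j+1)) (hwb : ∀ j ≤ t, |w j| ≤ c)
    (hwe : ∀ j ≤ t, j % 2 = 0 → g (w j) ≤ -C) (hwo : ∀ j ≤ t, j % 2 = 1 → C ≤ g (w j))
    (hleft : ∀ x, x ≤ -c → g x ≤ -C)
    (N : ℕ) (a : ℕ → ℝ)
    (ham : ∀ i, i < N → a i < a (i+1)) (hab : ∀ i ≤ N, |a i| ≤ c)
    (hae : ∀ i ≤ N, i % 2 = 0 → f (a i) ≤ -C) (hao : ∀ i ≤ N, i % 2 = 1 → C ≤ f (a i)) :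
    ∃ y : ℕ → ℝ, (∀ i, i < N*t → y i < y (i+1)) ∧ (∀ i ≤ N*t, |y i| ≤ c) ∧
      (∀ i ≤ N*t, i % 2 = 0 → g (f (y i)) ≤ -C) ∧ (∀ i ≤ N*t, i % 2 = 1 → C ≤ g (f (y i))) := by
  have ht1 : 1 ≤ t := by omega
  -- inner claim
  have main : ∀ n ≤ N, ∃ y : ℕ → ℝ, (∀ i, i < n*t → y i < y (i+1)) ∧
      (∀ i ≤ n*t, a 0 ≤ y i ∧ y i ≤ a n) ∧
      (∀ i ≤ n*t, i % 2 = 0 → g (f (y i)) ≤ -C) ∧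
      (∀ i ≤ n*t, i % 2 = 1 → C ≤ g (f (y i))) := by
    intro n
    induction n with
    | zero =>
      intro _
      refine ⟨fun _ => a 0, by omega, fun i hi => ⟨le_refl _, le_refl _⟩, fun i hi h => ?_, by omega⟩
      · have hi0 : i = 0 := by omega
        subst hi0
        have : f (a 0) ≤ -C := hae 0 (by omega) rfl
        exact hleft _ (this.trans (by linarith))
    | succ n ih =>
      intro hn1
      obtain ⟨y, hym, hyb, hye, hyo⟩ := ih (by omega)
      have huv : a n < a (n+1) := ham n (by omega)
      have ha0n : a 0 ≤ a n := by
        have := mono15 ham n 0 (by omega)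
        simpa using this
      set M := n * t with hM
      have hMt : (n+1) * t = M + t := by rw [hM]; ring
      rcases Nat.even_or_odd n with hn | hn
      · -- n even : f (a n) ≤ -C, f (a (n+1)) ≥ C ; select w 1 .. w t upward
        have hn2 : n % 2 = 0 := Nat.even_iff.mp hn
        have hM2 : M % 2 = 0 := by rw [hM, Nat.mul_mod, hn2]; simp
        have hfu : f (a n) ≤ -C := hae n (by omega) hn2
        have hfv : C ≤ f (a (n+1)) := hao (n+1) hn1 (by omega)
        obtain ⟨z, hzm, hz⟩ := sel15 f hf (t-1) (fun j => w (j+1)) (a n) (a (n+1)) huv.le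
          (fun i hi => hwm (i+1) (by omega))
          (by
            show f (a n) < w (0+1)
            have := hwb 1 ht1
            have h1 : -c ≤ w 1 := (abs_le.mp this).1
            linarith)
          (by
            show w (t - 1 + 1) ≤ f (a (n+1))
            rw [show t - 1 + 1 = t by omega]
            have := hwb t le_rfl
            have h1 : w t ≤ c := (abs_le.mp this).2
            linarith)
        refine ⟨fun i => if i ≤ M then y i else z (i - (M+1)), ?_, ?_, ?_, ?_⟩
        · intro i hi
          rw [hMt] at hi
          by_cases h : i + 1 ≤ M
          · simp only [if_pos (by omega : i ≤ M), if_pos h]; exact hym i (by omega)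
          · by_cases h' : i ≤ M
            · have hiM : i = M := by omega
              simp only [if_pos h', if_neg (by omega : ¬ i+1 ≤ M)]
              calc y i ≤ a n := (hyb i (by omega)).2
              _ < z (i+1-(M+1)) := by
                  rw [show i+1-(M+1) = 0 by omega]
                  exact (hz 0 (by omega)).1
            · simp only [if_neg h', if_neg (by omega : ¬ i+1 ≤ M)]
              rw [show i+1-(M+1) = (i-(M+1))+1 by omega]
              exact hzm (i-(M+1)) (by omega)
        · intro i hi
          rw [hMt] at hi
          by_cases h : i ≤ M
          · exact ⟨by simp only [if_pos h]; exact (hyb i h).1,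
              by simp only [if_pos h]; exact (hyb i h).2.trans (le_of_lt huv)⟩
          · simp only [if_neg h]
            have h1 := hz (i-(M+1)) (by omega)
            exact ⟨ha0n.trans h1.1.le, h1.2.1⟩
        · intro i hi hpar
          rw [hMt] at hi
          by_cases h : i ≤ M
          · simp only [if_pos h]; exact hye i h hpar
          · simp only [if_neg h]
            have h1 := (hz (i-(M+1)) (by omega)).2.2
            rw [h1]
            refine hwe (i-(M+1)+1) (by omega) (by omega)
        · intro i hi hpar
          rw [hMt] at hi
          by_cases h : i ≤ M
          · simp only [if_pos h]; exact hyo i h hpar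
          · simp only [if_neg h]
            have h1 := (hz (i-(M+1)) (by omega)).2.2
            rw [h1]
            refine hwo (i-(M+1)+1) (by omega) (by omega)
      · -- n odd : f (a n) ≥ C, f (a (n+1)) ≤ -C ; select downward
        have hn2 : n % 2 = 1 := Nat.odd_iff.mp hn
        have hM2 : M % 2 = 1 := by rw [hM, Nat.mul_mod, hn2, ht]
        have hfu : C ≤ f (a n) := hao n (by omega) hn2
        have hfv : f (a (n+1)) ≤ -C := hae (n+1) hn1 (by omega)
        obtain ⟨z, hzm, hz⟩ := sel15 (fun x => -(f x)) hf.neg (t-1) (fun j => -w (t-1-j))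
          (a n) (a (n+1)) huv.le
          (fun i hi => by
            show -w (t-1-i) < -w (t-1-(i+1))
            have h2 := hwm (t-1-(i+1)) (by omega)
            rw [show t-1-(i+1) + 1 = t-1-i by omega] at h2
            linarith)
          (by
            show -(f (a n)) < -w (t-1-0)
            have := hwb (t-1) (by omega)
            have h1 : w (t-1) ≤ c := (abs_le.mp this).2
            rw [show t-1-0 = t-1 by omega]
            linarith)
          (by
            show -w (t-1-(t-1)) ≤ -(f (a (n+1)))
            rw [show t-1-(t-1) = 0 by omega]
            have := hwb 0 (by omega)
            have h1 : -c ≤ w 0 := (abs_le.mp this).1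
            linarith)
        have hzval : ∀ j ≤ t-1, f (z j) = w (t-1-j) := by
          intro j hj
          have := (hz j hj).2.2
          simpa only [neg_inj] using this
        refine ⟨fun i => if i ≤ M then y i else z (i - (M+1)), ?_, ?_, ?_, ?_⟩
        · intro i hi
          rw [hMt] at hi
          by_cases h : i + 1 ≤ M
          · simp only [if_pos (by omega : i ≤ M), if_pos h]; exact hym i (by omega)
          · by_cases h' : i ≤ M
            · simp only [if_pos h', if_neg (by omega : ¬ i+1 ≤ M)]
              calc y i ≤ a n := (hyb i (by omega)).2
              _ < z (i+1-(M+1)) := by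
                  rw [show i+1-(M+1) = 0 by omega]
                  exact (hz 0 (by omega)).1
            · simp only [if_neg h', if_neg (by omega : ¬ i+1 ≤ M)]
              rw [show i+1-(M+1) = (i-(M+1))+1 by omega]
              exact hzm (i-(M+1)) (by omega)
        · intro i hi
          rw [hMt] at hi
          by_cases h : i ≤ M
          · exact ⟨by simp only [if_pos h]; exact (hyb i h).1,
              by simp only [if_pos h]; exact (hyb i h).2.trans (le_of_lt huv)⟩
          · simp only [if_neg h]
            have h1 := hz (i-(M+1)) (by omega)
            exact ⟨ha0n.trans h1.1.le, h1.2.1⟩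
        · intro i hi hpar
          rw [hMt] at hi
          by_cases h : i ≤ M
          · simp only [if_pos h]; exact hye i h hpar
          · simp only [if_neg h]
            rw [hzval (i-(M+1)) (by omega)]
            refine hwe (t-1-(i-(M+1))) (by omega) (by omega)
        · intro i hi hpar
          rw [hMt] at hi
          by_cases h : i ≤ M
          · simp only [if_pos h]; exact hyo i h hpar
          · simp only [if_neg h]
            rw [hzval (i-(M+1)) (by omega)]
            refine hwo (t-1-(i-(M+1))) (by omega) (by omega)
  obtain ⟨y, h1, h2, h3, h4⟩ := main N le_rfl
  refine ⟨y, h1, fun i hi => ?_, h3, h4⟩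
  have hb0 := abs_le.mp (hab 0 (by omega))
  have hbN := abs_le.mp (hab N le_rfl)
  have := h2 i hi
  rw [abs_le]
  constructor <;> linarith [this.1, this.2]

lemma chain15 (g : ℝ → ℝ) (hg : Continuous g) (c C : ℝ) (hc : 0 < c) (hcC : c < C)
    (t : ℕ) (ht : t % 2 = 1) (w : ℕ → ℝ)
    (hwm : ∀ j, j < t → w j < w (j+1)) (hwb : ∀ j ≤ t, |w j| ≤ c)
    (hwe : ∀ j ≤ t, j % 2 = 0 → g (w j) ≤ -C) (hwo : ∀ j ≤ t, j % 2 = 1 → C ≤ g (w j))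
    (hleft : ∀ x, x ≤ -c → g x ≤ -C) :
    ∀ m, 1 ≤ m → ∃ a : ℕ → ℝ, (∀ i, i < t^m → a i < a (i+1)) ∧ (∀ i ≤ t^m, |a i| ≤ c) ∧
      (∀ i ≤ t^m, i % 2 = 0 → g^[m] (a i) ≤ -C) ∧ (∀ i ≤ t^m, i % 2 = 1 → C ≤ g^[m] (a i)) := by
  intro m hm
  induction m, hm using Nat.le_induction with
  | base =>
    refine ⟨w, ?_, ?_, ?_, ?_⟩ <;> simp only [pow_one, Function.iterate_one]
    · exact hwm
    · exact hwb
    · exact hwe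
    · exact hwo
  | succ m hm ih =>
    obtain ⟨a, h1, h2, h3, h4⟩ := ih
    obtain ⟨y, k1, k2, k3, k4⟩ := step15 g (g^[m]) (hg.iterate m) c C hc hcC t ht w
      hwm hwb hwe hwo hleft (t^m) a h1 h2 h3 h4
    have hpow : t^(m+1) = t^m * t := pow_succ t m
    have hit : ∀ x, g^[m+1] x = g (g^[m] x) := fun x => Function.iterate_succ_apply' g m x
    refine ⟨y, ?_, ?_, ?_, ?_⟩
    · rw [hpow]; exact k1
    · rw [hpow]; exact k2
    · intro i hi hp; rw [hit]; exact k3 i (by rwa [← hpow]) hp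
    · intro i hi hp; rw [hit]; exact k4 i (by rwa [← hpow]) hp

lemma prodid15 (k : ℕ) (x : ℝ) :
    x * ∏ j ∈ Finset.Icc 1 k, (x^2 - (j:ℝ)^2)
      = ∏ r ∈ Finset.Icc (-(k:ℤ)) (k:ℤ), (x - (r:ℝ)) := by
  induction k with
  | zero => simp
  | succ k ih =>
    rw [Finset.prod_Icc_succ_top (by omega : 1 ≤ k+1)]
    have e1 : Finset.Icc (-((k:ℤ)+1)) ((k:ℤ)+1)
        = insert (-((k:ℤ)+1)) (insert ((k:ℤ)+1) (Finset.Icc (-(k:ℤ)) (k:ℤ))) := by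
      ext r
      simp only [Finset.mem_Icc, Finset.mem_insert]
      omega
    push_cast
    rw [e1, Finset.prod_insert (by simp only [Finset.mem_insert, Finset.mem_Icc]; omega),
      Finset.prod_insert (by simp only [Finset.mem_Icc]; omega)]
    push_cast
    rw [← ih]
    ring

lemma signprod15 {ι : Type*} (s : Finset ι) (f : ι → ℝ)
    (h : ∀ i ∈ s, f i ≤ -(1/2) ∨ (1/2:ℝ) ≤ f i) :
    ((1:ℝ)/2)^s.card ≤ (-1:ℝ)^((s.filter (fun i => f i < 0)).card) * ∏ i ∈ s, f i := by
  classical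
  set s1 := s.filter (fun i => f i < 0) with hs1
  set s2 := s.filter (fun i => ¬ f i < 0) with hs2
  have hcard : s1.card + s2.card = s.card := by
    rw [hs1, hs2]; exact Finset.card_filter_add_card_filter_not _
  have hsplit : ∏ i ∈ s, f i = (∏ i ∈ s1, f i) * ∏ i ∈ s2, f i := by
    rw [hs1, hs2]; exact (Finset.prod_filter_mul_prod_filter_not s _ f).symm
  have hneg : ∏ i ∈ s1, (-(f i)) = (-1:ℝ)^s1.card * ∏ i ∈ s1, f i := by
    calc ∏ i ∈ s1, (-(f i)) = ∏ i ∈ s1, ((-1) * f i) := by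
          refine Finset.prod_congr rfl fun i _ => by ring
    _ = (-1:ℝ)^s1.card * ∏ i ∈ s1, f i := by
          rw [Finset.prod_mul_distrib, Finset.prod_const]
  have h1 : ((1:ℝ)/2)^s1.card ≤ ∏ i ∈ s1, (-(f i)) := by
    rw [← Finset.prod_const]
    refine Finset.prod_le_prod (fun i _ => by norm_num) (fun i hi => ?_)
    have hi' := Finset.mem_filter.mp hi
    rcases h i hi'.1 with h' | h'
    · linarith
    · linarith [hi'.2]
  have h2 : ((1:ℝ)/2)^s2.card ≤ ∏ i ∈ s2, f i := by
    rw [← Finset.prod_const]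
    refine Finset.prod_le_prod (fun i _ => by norm_num) (fun i hi => ?_)
    have hi' := Finset.mem_filter.mp hi
    rcases h i hi'.1 with h' | h'
    · linarith [hi'.2]
    · exact h'
  have hpos1 : (0:ℝ) < ((1:ℝ)/2)^s1.card := by positivity
  have hpos2 : (0:ℝ) < ((1:ℝ)/2)^s2.card := by positivity
  calc ((1:ℝ)/2)^s.card = ((1:ℝ)/2)^s1.card * ((1:ℝ)/2)^s2.card := by
        rw [← pow_add, hcard]
  _ ≤ (∏ i ∈ s1, (-(f i))) * ∏ i ∈ s2, f i := by
        exact mul_le_mul h1 h2 hpos2.le (by linarith)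
  _ = (-1:ℝ)^s1.card * ∏ i ∈ s, f i := by
        rw [hneg, hsplit]; ring

lemma key15 (k j : ℕ) (hj : j ≤ 2*k+1) :
    (j % 2 = 0 → ∏ r ∈ Finset.Icc (-(k:ℤ)) (k:ℤ), (((j:ℝ) - k - 1/2) - (r:ℝ))
        ≤ -(((1:ℝ)/2)^(2*k+1))) ∧
    (j % 2 = 1 → ((1:ℝ)/2)^(2*k+1)
        ≤ ∏ r ∈ Finset.Icc (-(k:ℤ)) (k:ℤ), (((j:ℝ) - k - 1/2) - (r:ℝ))) := by
  set w : ℝ := (j:ℝ) - k - 1/2 with hw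
  set s := Finset.Icc (-(k:ℤ)) (k:ℤ) with hs
  have hsize : ∀ r ∈ s, w - (r:ℝ) ≤ -(1/2) ∨ (1/2:ℝ) ≤ w - (r:ℝ) := by
    intro r hr
    rcases le_or_gt ((j:ℤ) - k) r with h | h
    · left
      have : ((j:ℝ) - k) ≤ (r:ℝ) := by exact_mod_cast h
      rw [hw]; linarith
    · right
      have : (r:ℝ) ≤ (j:ℝ) - k - 1 := by exact_mod_cast Int.le_sub_one_of_lt h
      rw [hw]; linarith
  have hfilter : s.filter (fun r : ℤ => w - (r:ℝ) < 0) = Finset.Icc ((j:ℤ)-k) (k:ℤ) := by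
    ext r
    simp only [Finset.mem_filter, hs, Finset.mem_Icc]
    constructor
    · rintro ⟨⟨h1, h2⟩, h3⟩
      refine ⟨?_, h2⟩
      by_contra hcon
      have : r ≤ (j:ℤ) - k - 1 := by omega
      have : (r:ℝ) ≤ (j:ℝ) - k - 1 := by exact_mod_cast this
      rw [hw] at h3; linarith
    · rintro ⟨h1, h2⟩
      have h1' : ((j:ℝ) - k) ≤ (r:ℝ) := by exact_mod_cast h1
      have h0 : -(k:ℤ) ≤ r := by omega
      exact ⟨⟨h0, h2⟩, by rw [hw]; linarith⟩
  have hcards : s.card = 2*k+1 := by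
    rw [hs, Int.card_Icc]; omega
  have hcardf : (s.filter (fun r : ℤ => w - (r:ℝ) < 0)).card = 2*k+1-j := by
    rw [hfilter, Int.card_Icc]; omega
  have hmain := signprod15 s (fun r : ℤ => w - (r:ℝ)) hsize
  rw [hcards, hcardf] at hmain
  constructor
  · intro hp
    have hodd : Odd (2*k+1-j) := by
      rw [Nat.odd_iff]; omega
    rw [hodd.neg_one_pow] at hmain
    linarith
  · intro hp
    have heven : Even (2*k+1-j) := by
      rw [Nat.even_iff]; omega
    rw [heven.neg_one_pow, one_mul] at hmain
    linarith

noncomputable def Pm15 (G : Polynomial ℝ) : ℕ → Polynomial ℝ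
  | 0 => Polynomial.X
  | n+1 => (Pm15 G n).comp G

lemma upper15 (k : ℕ) (hk : 1 ≤ k) (b : ℝ) (hb : b ≠ 0) (m : ℕ) (hm : 1 ≤ m) :
    {x : ℝ | (fun y : ℝ => b * y * ∏ j ∈ Finset.Icc 1 k, (y ^ 2 - (j : ℝ) ^ 2))^[m] x
      = -x}.Finite ∧
    {x : ℝ | (fun y : ℝ => b * y * ∏ j ∈ Finset.Icc 1 k, (y ^ 2 - (j : ℝ) ^ 2))^[m] x
      = -x}.ncard ≤ (2*k+1)^m := by
  classical
  set g : ℝ → ℝ := fun y : ℝ => b * y * ∏ j ∈ Finset.Icc 1 k, (y ^ 2 - (j : ℝ) ^ 2) with hgdef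
  set G : Polynomial ℝ :=
    Polynomial.C b * (Polynomial.X * ∏ j ∈ Finset.Icc 1 k,
      (Polynomial.X^2 - Polynomial.C ((j:ℝ)^2))) with hG
  have heval : ∀ x : ℝ, G.eval x = g x := by
    intro x
    simp [hG, hgdef, Polynomial.eval_prod, mul_assoc]
  have hmonic : (Polynomial.X * ∏ j ∈ Finset.Icc 1 k,
      (Polynomial.X^2 - Polynomial.C ((j:ℝ)^2))).Monic := by
    exact (Polynomial.monic_X).mul (Polynomial.monic_prod_of_monic _ _
      (fun j _ => Polynomial.monic_X_pow_sub_C _ two_ne_zero))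
  have hdegp : (Polynomial.X * ∏ j ∈ Finset.Icc 1 k,
      (Polynomial.X^2 - Polynomial.C ((j:ℝ)^2))).natDegree = 2*k+1 := by
    rw [(Polynomial.monic_X).natDegree_mul (Polynomial.monic_prod_of_monic _ _
      (fun j _ => Polynomial.monic_X_pow_sub_C _ two_ne_zero))]
    rw [Polynomial.natDegree_prod_of_monic _ _
      (fun j _ => Polynomial.monic_X_pow_sub_C _ two_ne_zero)]
    simp only [Polynomial.natDegree_X, Polynomial.natDegree_X_pow_sub_C]
    rw [Finset.sum_const, smul_eq_mul, Nat.card_Icc]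
    omega
  have hdegG : G.natDegree = 2*k+1 := by
    rw [hG, Polynomial.natDegree_C_mul hb, hdegp]
  have hPeval : ∀ n (x : ℝ), (Pm15 G n).eval x = g^[n] x := by
    intro n
    induction n with
    | zero => intro x; simp [Pm15]
    | succ n ih =>
      intro x
      rw [Function.iterate_succ_apply]
      show ((Pm15 G n).comp G).eval x = _
      rw [Polynomial.eval_comp, heval, ih]
  have hPdeg : ∀ n, (Pm15 G n).natDegree = (2*k+1)^n := by
    intro n
    induction n with
    | zero => simp [Pm15]
    | succ n ih =>
      show ((Pm15 G n).comp G).natDegree = _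
      rw [Polynomial.natDegree_comp, ih, hdegG, pow_succ]
  have htm : 3 ≤ (2*k+1)^m := by
    calc 3 ≤ 2*k+1 := by omega
    _ = (2*k+1)^1 := (pow_one _).symm
    _ ≤ (2*k+1)^m := Nat.pow_le_pow_right (by omega) hm
  set Q : Polynomial ℝ := Pm15 G m + Polynomial.X with hQ
  have hQne : Q ≠ 0 := by
    intro h0
    have hPm : Pm15 G m = -Polynomial.X := by
      have := congrArg (fun p => p - Polynomial.X) h0
      simpa [hQ, sub_eq_iff_eq_add] using this
    have := hPdeg m
    rw [hPm] at this
    simp only [Polynomial.natDegree_neg, Polynomial.natDegree_X] at this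
    omega
  have hsub : {x : ℝ | g^[m] x = -x} ⊆ ↑(Q.roots.toFinset) := by
    intro x hx
    simp only [Set.mem_setOf_eq] at hx
    have : Q.eval x = 0 := by
      rw [hQ]
      simp [hPeval m x, hx]
    simp only [Finset.coe_sort_coe, Multiset.mem_toFinset, Finset.mem_coe]
    exact (Polynomial.mem_roots hQne).mpr this
  have hfin : {x : ℝ | g^[m] x = -x}.Finite :=
    Set.Finite.subset (Q.roots.toFinset.finite_toSet) hsub
  refine ⟨hfin, ?_⟩
  have h1 : {x : ℝ | g^[m] x = -x}.ncard ≤ (Q.roots.toFinset : Set ℝ).ncard :=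
    Set.ncard_le_ncard hsub (Q.roots.toFinset.finite_toSet)
  rw [Set.ncard_coe_finset] at h1
  have h2 : Q.roots.toFinset.card ≤ Multiset.card Q.roots := Multiset.toFinset_card_le _
  have h3 : Multiset.card Q.roots ≤ Q.natDegree := Q.card_roots'
  have h4 : Q.natDegree ≤ (2*k+1)^m := by
    rw [hQ]
    refine le_trans (Polynomial.natDegree_add_le _ _) ?_
    simp only [Polynomial.natDegree_X, hPdeg m]
    omega
  omega

theorem stmt_15 (k : ℕ) (hk : 1 ≤ k) :
    ∃ B : ℝ, 0 < B ∧ ∀ b : ℝ, B ≤ b →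
      ((∀ x : ℝ,
          (b * (-x) * ∏ j ∈ Finset.Icc 1 k, ((-x) ^ 2 - (j : ℝ) ^ 2))
            = -(b * x * ∏ j ∈ Finset.Icc 1 k, (x ^ 2 - (j : ℝ) ^ 2))) ∧
       ∀ m : ℕ, 1 ≤ m →
        {x : ℝ | (fun y : ℝ => b * y * ∏ j ∈ Finset.Icc 1 k, (y ^ 2 - (j : ℝ) ^ 2))^[m] x
          = -x}.ncard = (2 * k + 1) ^ m) := by
  classical
  set E : ℝ := 2^(2*k+1) with hE
  have hEpos : (0:ℝ) < E := by positivity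
  have hE1 : (1:ℝ) ≤ E := one_le_pow₀ (by norm_num)
  refine ⟨((k:ℝ)+2) * E, by positivity, fun b hb => ?_⟩
  have hb0 : (0:ℝ) < b := lt_of_lt_of_le (by positivity) hb
  have hbC : ((k:ℝ)+2) ≤ b := by nlinarith
  constructor
  · intro x
    have hpr : ∀ j ∈ Finset.Icc 1 k, ((-x)^2 - (j:ℝ)^2) = (x^2 - (j:ℝ)^2) := by
      intro j _; rw [neg_sq]
    rw [Finset.prod_congr rfl hpr]; ring
  · intro m hm
    set g : ℝ → ℝ := fun y : ℝ => b * y * ∏ j ∈ Finset.Icc 1 k, (y ^ 2 - (j : ℝ) ^ 2)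
      with hgdef
    have hg : Continuous g := by
      rw [hgdef]
      exact (continuous_const.mul continuous_id).mul
        (continuous_finset_prod _ fun j _ => (continuous_pow 2).sub continuous_const)
    set c : ℝ := (k:ℝ)+1 with hc
    set C : ℝ := (k:ℝ)+2 with hC
    have hcpos : 0 < c := by rw [hc]; positivity
    have hcC : c < C := by rw [hc, hC]; linarith
    set t : ℕ := 2*k+1 with htdef
    have ht : t % 2 = 1 := by omega
    set w : ℕ → ℝ := fun j : ℕ => (j:ℝ) - k - 1/2 with hwdef
    -- value of g at w j
    have hgw : ∀ j : ℕ, g (w j) = b * ∏ r ∈ Finset.Icc (-(k:ℤ)) (k:ℤ), (w j - (r:ℝ)) := by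
      intro j
      rw [hgdef]
      show b * (w j) * _ = _
      rw [mul_assoc, prodid15]
    have hhalf : ((1:ℝ)/2)^(2*k+1) = 1/E := by
      rw [hE, div_pow, one_pow]
    have hbig : C ≤ b * ((1/2:ℝ))^(2*k+1) := by
      rw [hhalf]
      rw [mul_one_div, le_div_iff₀ hEpos]
      exact hb
    have hwm : ∀ j, j < t → w j < w (j+1) := by
      intro j _
      show (j:ℝ) - k - 1/2 < ((j:ℕ)+1:ℕ) - k - 1/2
      push_cast; linarith
    have hwb : ∀ j ≤ t, |w j| ≤ c := by
      intro j hj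
      have hj' : (j:ℝ) ≤ 2*k+1 := by exact_mod_cast hj
      have hj0 : (0:ℝ) ≤ (j:ℝ) := Nat.cast_nonneg j
      rw [hwdef, hc, abs_le]
      constructor <;> [linarith; linarith]
    have hwe : ∀ j ≤ t, j % 2 = 0 → g (w j) ≤ -C := by
      intro j hj hp
      have hkey := (key15 k j (by omega)).1 hp
      rw [hgw j]
      have : b * ∏ r ∈ Finset.Icc (-(k:ℤ)) (k:ℤ), (w j - (r:ℝ))
          ≤ b * (-(((1:ℝ)/2)^(2*k+1))) :=
        mul_le_mul_of_nonneg_left hkey hb0.le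
      have h2 : b * (-(((1:ℝ)/2)^(2*k+1))) = -(b * ((1/2:ℝ))^(2*k+1)) := by ring
      rw [h2] at this
      linarith
    have hwo : ∀ j ≤ t, j % 2 = 1 → C ≤ g (w j) := by
      intro j hj hp
      have hkey := (key15 k j (by omega)).2 hp
      rw [hgw j]
      have : b * (((1:ℝ)/2)^(2*k+1))
          ≤ b * ∏ r ∈ Finset.Icc (-(k:ℤ)) (k:ℤ), (w j - (r:ℝ)) :=
        mul_le_mul_of_nonneg_left hkey hb0.le
      linarith
    have hright : ∀ x : ℝ, c ≤ x → C ≤ g x := by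
      intro x hx
      have hx1 : (1:ℝ) ≤ x := by rw [hc] at hx; have : (0:ℝ) ≤ k := Nat.cast_nonneg k; linarith
      have hP : (1:ℝ) ≤ ∏ j ∈ Finset.Icc 1 k, (x ^ 2 - (j : ℝ) ^ 2) := by
        calc (1:ℝ) = ∏ _j ∈ Finset.Icc 1 k, (1:ℝ) := by simp
        _ ≤ ∏ j ∈ Finset.Icc 1 k, (x ^ 2 - (j : ℝ) ^ 2) := by
            refine Finset.prod_le_prod (fun _ _ => zero_le_one) (fun j hj => ?_)
            have hjk : (j:ℝ) ≤ k := by exact_mod_cast (Finset.mem_Icc.mp hj).2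
            have hj0 : (0:ℝ) ≤ j := Nat.cast_nonneg j
            have h1 : (1:ℝ) ≤ x - j := by rw [hc] at hx; linarith
            have h2 : (1:ℝ) ≤ x + j := by linarith
            nlinarith
      have e1 : b ≤ b * x := le_mul_of_one_le_right hb0.le hx1
      have e2 : b * x ≤ b * x * ∏ j ∈ Finset.Icc 1 k, (x ^ 2 - (j : ℝ) ^ 2) :=
        le_mul_of_one_le_right (by positivity) hP
      show C ≤ b * x * ∏ j ∈ Finset.Icc 1 k, (x ^ 2 - (j : ℝ) ^ 2)
      rw [hC]; linarith
    have godd : ∀ x : ℝ, g (-x) = -(g x) := by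
      intro x
      rw [hgdef]
      show b * (-x) * ∏ j ∈ Finset.Icc 1 k, ((-x) ^ 2 - (j : ℝ) ^ 2) = _
      have hpr : ∀ j ∈ Finset.Icc 1 k, ((-x)^2 - (j:ℝ)^2) = (x^2 - (j:ℝ)^2) := by
        intro j _; rw [neg_sq]
      rw [Finset.prod_congr rfl hpr]; ring
    have hleft : ∀ x : ℝ, x ≤ -c → g x ≤ -C := by
      intro x hx
      have := hright (-x) (by linarith)
      have h2 := godd (-x)
      rw [neg_neg] at h2
      linarith [this, h2]
    -- chain
    obtain ⟨a, ham, hab, hae, hao⟩ := chain15 g hg c C hcpos hcC t ht w hwm hwb hwe hwo hleft m hm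
    -- roots in each gap
    have hroot : ∀ i, i < t^m → ∃ r : ℝ, a i < r ∧ r < a (i+1) ∧ g^[m] r = -r := by
      intro i hi
      have h01 : a i < a (i+1) := ham i hi
      have hbi := abs_le.mp (hab i (by omega))
      have hbi1 := abs_le.mp (hab (i+1) (by omega))
      set h : ℝ → ℝ := fun x => g^[m] x + x with hh
      have hhc : Continuous h := (hg.iterate m).add continuous_id
      rcases Nat.even_or_odd i with hpar | hpar
      · have hp2 : i % 2 = 0 := Nat.even_iff.mp hpar
        have v1 : h (a i) < 0 := by
          have := hae i (by omega) hp2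
          show g^[m] (a i) + a i < 0
          linarith [hbi.2]
        have v2 : 0 < h (a (i+1)) := by
          have := hao (i+1) (by omega) (by omega)
          show 0 < g^[m] (a (i+1)) + a (i+1)
          linarith [hbi1.1]
        obtain ⟨r, hr, hr0⟩ := intermediate_value_Icc h01.le hhc.continuousOn
          ⟨v1.le, v2.le⟩
        refine ⟨r, ?_, ?_, ?_⟩
        · rcases eq_or_lt_of_le hr.1 with rfl | h'
          · exact absurd hr0 (ne_of_lt v1)
          · exact h'
        · rcases eq_or_lt_of_le hr.2 with h' | h'
          · rw [h'] at hr0; exact absurd hr0 (ne_of_gt v2)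
          · exact h'
        · have : g^[m] r + r = 0 := hr0
          linarith
      · have hp2 : i % 2 = 1 := Nat.odd_iff.mp hpar
        have v1 : 0 < h (a i) := by
          have := hao i (by omega) hp2
          show 0 < g^[m] (a i) + a i
          linarith [hbi.1]
        have v2 : h (a (i+1)) < 0 := by
          have := hae (i+1) (by omega) (by omega)
          show g^[m] (a (i+1)) + a (i+1) < 0
          linarith [hbi1.2]
        obtain ⟨r, hr, hr0⟩ := intermediate_value_Icc' h01.le hhc.continuousOn
          ⟨v2.le, v1.le⟩
        refine ⟨r, ?_, ?_, ?_⟩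
        · rcases eq_or_lt_of_le hr.1 with rfl | h'
          · exact absurd hr0 (ne_of_gt v1)
          · exact h'
        · rcases eq_or_lt_of_le hr.2 with h' | h'
          · rw [h'] at hr0; exact absurd hr0 (ne_of_lt v2)
          · exact h'
        · have : g^[m] r + r = 0 := hr0
          linarith
    choose ρ hρ1 hρ2 hρ3 using hroot
    set ρ' : ℕ → ℝ := fun i => if hi : i < t^m then ρ i hi else 0 with hρ'
    have hρmono : ∀ i j : ℕ, i < j → j < t^m → ρ' i < ρ' j := by
      intro i j hij hj
      have hi : i < t^m := by omega
      simp only [hρ', dif_pos hi, dif_pos hj]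
      calc ρ i hi < a (i+1) := hρ2 i hi
      _ ≤ a j := by
          have := mono15 ham (j - (i+1)) (i+1) (by omega)
          rwa [show (i+1) + (j - (i+1)) = j by omega] at this
      _ < ρ j hj := hρ1 j hj
    set S := {x : ℝ | g^[m] x = -x} with hS
    obtain ⟨hfin, hub⟩ := upper15 k hk b hb0.ne' m hm
    rw [← hgdef] at hfin hub
    have hsub : ↑((Finset.range (t^m)).image ρ') ⊆ S := by
      intro x hx
      simp only [Finset.coe_image, Set.mem_image, Finset.mem_coe, Finset.mem_range] at hx
      obtain ⟨i, hi, rfl⟩ := hx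
      rw [hS]
      show g^[m] (ρ' i) = -(ρ' i)
      simp only [hρ', dif_pos hi]
      exact hρ3 i hi
    have hcardim : ((Finset.range (t^m)).image ρ').card = t^m := by
      rw [Finset.card_image_of_injOn, Finset.card_range]
      intro i hi j hj hij
      simp only [Finset.mem_coe, Finset.mem_range] at hi hj
      by_contra hne
      rcases lt_or_gt_of_ne hne with h | h
      · exact absurd hij (ne_of_lt (hρmono i j h hj))
      · exact absurd hij.symm (ne_of_lt (hρmono j i h hi))
    have hlow : t^m ≤ S.ncard := by
      have := Set.ncard_le_ncard hsub hfin
      rwa [Set.ncard_coe_finset, hcardim] at this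
    have hub' : S.ncard ≤ t^m := by rw [hS, htdef]; exact hub
    omega
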